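/- Let M be an admissible matroid on J, S = S(M) the associated ranked symplectic matroid, and P(S) ⊆ ℝ^n its matroid polytope. Let B be a basis of M containing a pair {a, a*} such that B ∖ {a, a*} is admissible, let e_B ∈ ℝ^J be the 0/1-indicator vector of B, and let env : ℝ^J → ℝ^n be the linear map with (env x)_i = x_i − x_{i*}. Set F = cl_M(B ∖ {a, a*}). Then env(e_B) ∈ P(S) if and only if F ∪ F* ≠ J ∖ {a, a*}. -/

import Mathlib

open Set Matroid
open scoped Matroid

open scoped Classical

/-- The ground set `J = [n] ⊔ [n]*`: `Sum.inl` is `[n]`, `Sum.inr` is `[n]*`. -/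
abbrev J (n : ℕ) := Fin n ⊕ Fin n

/-- The fixed-point-free involution `a ↦ a*` on `J n`. -/
def sstar {n : ℕ} (a : J n) : J n := Sum.swap a

/-- `A* = {a* : a ∈ A}`. -/
def starSet {n : ℕ} (A : Set (J n)) : Set (J n) := sstar '' A

/-- `A` is admissible if `A ∩ A* = ∅`. -/
def Admissible {n : ℕ} (A : Set (J n)) : Prop := A ∩ starSet A = ∅

/-- `A` is totally inadmissible if `A* = A`. -/
def TotallyInadmissible {n : ℕ} (A : Set (J n)) : Prop := starSet A = A

/-- The rank of a set in a matroid (on a finite ground type). -/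
noncomputable def Matroid.rSet {α : Type*} (M : Matroid α) (A : Set α) : ℕ :=
  sSup {k : ℕ | ∃ I, M.Indep I ∧ I ⊆ A ∧ I.ncard = k}

/-- The rank of a matroid. -/
noncomputable def Matroid.rnk {α : Type*} (M : Matroid α) : ℕ := M.rSet M.E

/-- A loopless matroid: every singleton of the ground set is independent. -/
def Matroid.LooplessM {α : Type*} (M : Matroid α) : Prop := ∀ a ∈ M.E, M.Indep {a}

/-- `I^ad M`: the independent sets of `M` whose closure is admissible. -/
def Iad {n : ℕ} (M : Matroid (J n)) : Set (Set (J n)) :=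
  {I | M.Indep I ∧ Admissible (M.closure I)}

/-- An admissible matroid on `J n`. -/
def IsAdmissibleMatroid {n : ℕ} (M : Matroid (J n)) : Prop :=
  M.E = Set.univ ∧ M.LooplessM ∧
    ∀ A : Set (J n),
      M.rSet A = sSup {v : ℕ | ∃ I : Set (J n), M.Indep I ∧ Admissible I ∧ I ⊆ A ∧
        v = if ∃ a, a ∈ A ∧ sstar a ∈ A ∧ (I ∪ {a}) ∈ Iad M ∧ (I ∪ {sstar a}) ∈ Iad M
            then I.ncard + 2 else I.ncard}

/-- Strongly admissible sets with respect to `M`. -/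
inductive StronglyAdmissible {n : ℕ} (M : Matroid (J n)) : Set (J n) → Prop
  | empty : StronglyAdmissible M ∅
  | insert {B : Set (J n)} {a : J n} : StronglyAdmissible M B →
      a ∉ M.closure B → sstar a ∉ M.closure B → StronglyAdmissible M (Insert.insert a B)

/-- The Möbius function of a finite poset, valued in `ℤ`. -/
noncomputable def mob {α : Type*} [PartialOrder α] [Fintype α] (x y : α) : ℤ :=
  letI : DecidableEq α := Classical.decEq α
  letI : @DecidableRel α α (· < ·) := Classical.decRel _
  letI : @DecidableRel α α (· ≤ ·) := Classical.decRel _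
  letI := Fintype.toLocallyFiniteOrder (α := α)
  IncidenceAlgebra.mu ℤ x y

/-- The lattice of flats of the ranked symplectic matroid associated to `M`:
admissible flats of `M` together with the ground set as top element. -/
abbrev LS {n : ℕ} (M : Matroid (J n)) :=
  {F : Set (J n) // (M.IsFlat F ∧ Admissible F) ∨ F = M.E}

/-- The Möbius number `μ(S(M))` of the lattice of flats of the ranked symplectic matroid. -/
noncomputable def muS {n : ℕ} (M : Matroid (J n)) : ℤ :=
  if h : M.IsFlat ∅ ∧ Admissible (∅ : Set (J n)) then
    mob (⟨∅, Or.inl h⟩ : LS M) ⟨M.E, Or.inr rfl⟩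
  else 0

/-- The Möbius function of the lattice of flats of `M`. -/
noncomputable def muFlats {n : ℕ} (M : Matroid (J n)) (F G : Set (J n)) : ℤ :=
  if h : M.IsFlat F ∧ M.IsFlat G then
    mob (⟨F, h.1⟩ : {X : Set (J n) // M.IsFlat X}) ⟨G, h.2⟩
  else 0

/-- Matroid deletion. -/
def Matroid.del {α : Type*} (M : Matroid α) (D : Set α) : Matroid α := M ↾ (M.E \ D)

/-- Matroid contraction, via the dual. -/
def Matroid.con {α : Type*} (M : Matroid α) (C : Set α) : Matroid α := (M✶ ↾ (M✶.E \ C))✶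

/-- A circuit: a minimal dependent subset of the ground set. -/
def Matroid.Circuit' {α : Type*} (M : Matroid α) (C : Set α) : Prop :=
  C ⊆ M.E ∧ ¬ M.Indep C ∧ ∀ D, D ⊂ C → M.Indep D

/-- Connectedness of a matroid: nonempty ground set and any two elements lie
in a common circuit. -/
def Matroid.ConnectedM {α : Type*} (M : Matroid α) : Prop :=
  M.E.Nonempty ∧ ∀ a ∈ M.E, ∀ b ∈ M.E, a = b ∨ ∃ C, M.Circuit' C ∧ a ∈ C ∧ b ∈ C

/-- The 0/1-indicator vector of `B ⊆ J` in `ℝ^J`. -/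
noncomputable def indic {n : ℕ} (B : Set (J n)) : J n → ℝ := fun a => if a ∈ B then 1 else 0

/-- The enveloping map `env : ℝ^J → ℝ^n`, `(env x)_i = x_i - x_{i*}`. -/
def envMap {n : ℕ} (x : J n → ℝ) : Fin n → ℝ := fun i => x (Sum.inl i) - x (Sum.inr i)

/-- `e±_A ∈ ℝ^n`: `+1` on coordinates `i ∈ A`, `-1` on coordinates with `i* ∈ A`, `0` otherwise. -/
noncomputable def epm {n : ℕ} (A : Set (J n)) : Fin n → ℝ := envMap (indic A)

/-- The matroid polytope `P(S(M))` of the ranked symplectic matroid of `M`. -/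
noncomputable def PolyS {n : ℕ} (M : Matroid (J n)) : Set (Fin n → ℝ) :=
  convexHull ℝ (epm '' {B | M.IsBase B ∧ Admissible B})

/-- The support of the Bergman fan of the ranked symplectic matroid of `M`. -/
def Berg {n : ℕ} (M : Matroid (J n)) : Set (Fin n → ℝ) :=
  {ω | ∃ C : Finset (Set (J n)),
    (∀ F ∈ C, M.IsFlat F ∧ Admissible F ∧ F ≠ ∅) ∧
    (∀ F ∈ C, ∀ G ∈ C, F ⊆ G ∨ G ⊆ F) ∧
    ∃ a : Set (J n) → ℝ, (∀ F, 0 ≤ a F) ∧ ω = ∑ F ∈ C, a F • epm F}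

/-- A maximal chain `F₁ ⊊ ⋯ ⊊ F_d` of proper flats of the lattice of flats of `S(M)`,
where `rank_M (F i) = i + 1`. -/
def IsFlagChain {n : ℕ} (M : Matroid (J n)) (d : ℕ) (F : Fin d → Set (J n)) : Prop :=
  (∀ i, M.IsFlat (F i) ∧ Admissible (F i) ∧ M.rSet (F i) = (i : ℕ) + 1) ∧
    ∀ i j : Fin d, i < j → F i ⊂ F j

/-- A Minkowski weight of dimension `d` on the Bergman fan of `S(M)`. -/
def IsMinkowskiWeight {n : ℕ} (M : Matroid (J n)) (d : ℕ)
    (c : (Fin d → Set (J n)) → ℤ) : Prop :=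
  ∀ (σ : Fin d → Set (J n)) (k : Fin d), IsFlagChain M d σ →
    (∑ G ∈ Finset.univ.filter
        (fun G : Set (J n) => IsFlagChain M d (Function.update σ k G)),
        (c (Function.update σ k G) : ℝ) • epm G)
      ∈ Submodule.span ℝ {v : Fin n → ℝ | ∃ i : Fin d, i ≠ k ∧ v = epm (σ i)}

/-- The top (rank `d`) flat of a maximal chain. -/
def chainTop {n d : ℕ} (σ : Fin d → Set (J n)) : Set (J n) := ⋃ i, σ i

section Helpers
variable {n : ℕ}

@[simp] lemma sstar_sstar (a : J n) : sstar (sstar a) = a := by cases a <;> rfl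

lemma sstar_ne (a : J n) : sstar a ≠ a := by cases a <;> simp [sstar]

lemma sstar_inj {a b : J n} (h : sstar a = sstar b) : a = b := by
  have := congrArg sstar h; simpa using this

lemma mem_starSet {a : J n} {A : Set (J n)} : a ∈ starSet A ↔ sstar a ∈ A := by
  constructor
  · rintro ⟨y, hy, rfl⟩; simpa using hy
  · intro h; exact ⟨sstar a, h, by simp⟩

lemma admissible_iff {A : Set (J n)} : Admissible A ↔ ∀ x ∈ A, sstar x ∉ A := by
  constructor
  · intro h x hx hsx
    have hm : x ∈ A ∩ starSet A := ⟨hx, mem_starSet.2 hsx⟩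
    rw [Admissible] at h
    simp [h] at hm
  · intro h
    rw [Admissible]
    ext x
    simp only [Set.mem_inter_iff, Set.mem_empty_iff_false, iff_false, not_and]
    intro hx hsx
    exact h x hx (mem_starSet.1 hsx)

lemma Admissible.mono {A B : Set (J n)} (h : Admissible B) (hAB : A ⊆ B) : Admissible A :=
  admissible_iff.2 fun x hx hsx => admissible_iff.1 h x (hAB hx) (hAB hsx)

lemma admissible_insert2 {D : Set (J n)} {α β : J n} (hD : Admissible D)
    (hα : α ∉ D) (hα' : sstar α ∉ D) (hβ : β ∉ D) (hβ' : sstar β ∉ D)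
    (hαβ : α ≠ β) (hαβ' : sstar α ≠ β) :
    Admissible (insert β (insert α D)) := by
  rw [admissible_iff] at hD ⊢
  intro x hx hsx
  simp only [Set.mem_insert_iff] at hx hsx
  rcases hx with rfl | rfl | hx <;> rcases hsx with h | h | h
  · exact sstar_ne x h
  · exact hαβ' (by rw [← h, sstar_sstar])
  · exact hβ' h
  · exact hαβ' h
  · exact sstar_ne x h
  · exact hα' h
  · exact hβ' (by rw [← h, sstar_sstar]; exact hx)
  · exact hα' (by rw [← h, sstar_sstar]; exact hx)
  · exact hD x hx h

lemma indic_mul_indic (S T : Set (J n)) (e : J n) :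
    indic S e * indic T e = indic (S ∩ T) e := by
  by_cases h1 : e ∈ S <;> by_cases h2 : e ∈ T <;> simp [indic, h1, h2]

lemma indic_sstar (T : Set (J n)) (e : J n) : indic T (sstar e) = indic (starSet T) e := by
  by_cases h : sstar e ∈ T <;> simp [indic, h, mem_starSet]

lemma sum_indic (S : Set (J n)) : ∑ e : J n, indic S e = (S.ncard : ℝ) := by
  classical
  rw [Set.ncard_eq_toFinset_card' S]
  simp [indic, Finset.sum_boole, Set.toFinset_setOf]

lemma sum_epm_mul (S T : Set (J n)) :
    ∑ i : Fin n, epm S i * epm T i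
      = ((S ∩ T).ncard : ℝ) - ((S ∩ starSet T).ncard : ℝ) := by
  have h1 : ∀ i : Fin n, epm S i * epm T i
      = (indic (S ∩ T) (Sum.inl i) + indic (S ∩ T) (Sum.inr i))
        - (indic (S ∩ starSet T) (Sum.inl i) + indic (S ∩ starSet T) (Sum.inr i)) := by
    intro i
    rw [← indic_mul_indic, ← indic_mul_indic, ← indic_mul_indic, ← indic_mul_indic,
      ← indic_sstar, ← indic_sstar]
    show (indic S (Sum.inl i) - indic S (Sum.inr i)) * (indic T (Sum.inl i) - indic T (Sum.inr i)) = _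
    have e1 : sstar (Sum.inl i : J n) = Sum.inr i := rfl
    have e2 : sstar (Sum.inr i : J n) = Sum.inl i := rfl
    rw [e1, e2]; ring
  rw [Finset.sum_congr rfl fun i _ => h1 i]
  rw [Finset.sum_sub_distrib, Finset.sum_add_distrib, Finset.sum_add_distrib,
    ← Fintype.sum_sum_type, ← Fintype.sum_sum_type, sum_indic, sum_indic]

lemma indic_insert {x : J n} {S : Set (J n)} (hx : x ∉ S) (e : J n) :
    indic (insert x S) e = indic S e + indic {x} e := by
  by_cases h : e = x
  · subst h; simp [indic, hx]
  · by_cases h' : e ∈ S <;> simp [indic, h, h']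

lemma epm_insert {x : J n} {S : Set (J n)} (hx : x ∉ S) :
    epm (insert x S) = epm S + epm {x} := by
  funext i
  simp only [epm, envMap, Pi.add_apply, indic_insert hx]
  ring

lemma epm_single_star (x : J n) : epm ({sstar x} : Set (J n)) = - epm {x} := by
  funext i
  cases x <;> simp [epm, envMap, indic, sstar, eq_comm]

end Helpers

section MatroidHelpers
variable {n : ℕ}

lemma rSet_indep_eq {M : Matroid (J n)} {B : Set (J n)} (hBi : M.Indep B) :
    M.rSet B = B.ncard := by
  have hub : ∀ k ∈ {k : ℕ | ∃ I, M.Indep I ∧ I ⊆ B ∧ I.ncard = k}, k ≤ B.ncard := by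
    rintro k ⟨I, -, hIB, rfl⟩
    exact Set.ncard_le_ncard hIB (Set.toFinite B)
  exact le_antisymm (csSup_le ⟨B.ncard, B, hBi, subset_rfl, rfl⟩ hub)
    (le_csSup ⟨B.ncard, hub⟩ ⟨B, hBi, subset_rfl, rfl⟩)

lemma B_eq_insert {B : Set (J n)} {a : J n} (ha : a ∈ B) (has : sstar a ∈ B) :
    B = insert a (insert (sstar a) (B \ {a, sstar a})) := by
  ext x
  simp only [Set.mem_insert_iff, Set.mem_diff, Set.mem_insert_iff, Set.mem_singleton_iff]
  constructor
  · intro hx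
    by_cases h1 : x = a
    · exact Or.inl h1
    by_cases h2 : x = sstar a
    · exact Or.inr (Or.inl h2)
    · exact Or.inr (Or.inr ⟨hx, by tauto⟩)
  · rintro (rfl | rfl | hx)
    exacts [ha, has, hx.1]

lemma a_notmem_diff {B : Set (J n)} (a : J n) : a ∉ B \ {a, sstar a} :=
  fun h => h.2 (Or.inl rfl)

lemma sa_notmem_diff {B : Set (J n)} (a : J n) : sstar a ∉ B \ {a, sstar a} :=
  fun h => h.2 (Or.inr rfl)

lemma ncard_B_eq {B : Set (J n)} {a : J n} (ha : a ∈ B) (has : sstar a ∈ B) :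
    B.ncard = (B \ {a, sstar a}).ncard + 2 := by
  have h1 : a ∉ insert (sstar a) (B \ {a, sstar a}) := by
    simp only [Set.mem_insert_iff]
    rintro (h | h)
    · exact sstar_ne a h.symm
    · exact a_notmem_diff a h
  conv_lhs => rw [B_eq_insert ha has]
  rw [Set.ncard_insert_of_notMem h1 (Set.toFinite _),
    Set.ncard_insert_of_notMem (sa_notmem_diff a) (Set.toFinite _)]

lemma epm_B_eq {B : Set (J n)} {a : J n} (ha : a ∈ B) (has : sstar a ∈ B) :
    epm B = epm (B \ {a, sstar a}) := by
  have h1 : a ∉ insert (sstar a) (B \ {a, sstar a}) := by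
    simp only [Set.mem_insert_iff]
    rintro (h | h)
    · exact sstar_ne a h.symm
    · exact a_notmem_diff a h
  conv_lhs => rw [B_eq_insert ha has]
  rw [epm_insert h1, epm_insert (sa_notmem_diff a), epm_single_star]
  abel

/-- Step A : the two closures are admissible. -/
lemma closure_adm_pair {M : Matroid (J n)} (hM : IsAdmissibleMatroid M)
    {B : Set (J n)} (hB : M.IsBase B) {a : J n} (ha : a ∈ B) (has : sstar a ∈ B)
    (hadm : Admissible (B \ {a, sstar a})) :
    Admissible (M.closure (insert a (B \ {a, sstar a}))) ∧
      Admissible (M.closure (insert (sstar a) (B \ {a, sstar a}))) := by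
  obtain ⟨hME, -, hax⟩ := hM
  set B' := B \ {a, sstar a} with hB'def
  have hsubuniv : ∀ S : Set (J n), S ⊆ M.E := by intro S; rw [hME]; exact Set.subset_univ S
  have hrB := hax B
  rw [rSet_indep_eq hB.indep] at hrB
  have hVne : {v : ℕ | ∃ I : Set (J n), M.Indep I ∧ Admissible I ∧ I ⊆ B ∧
      v = if ∃ c, c ∈ B ∧ sstar c ∈ B ∧ (I ∪ {c}) ∈ Iad M ∧ (I ∪ {sstar c}) ∈ Iad M
          then I.ncard + 2 else I.ncard}.Nonempty := by
    refine ⟨_, ∅, M.empty_indep, ?_, Set.empty_subset _, rfl⟩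
    rw [admissible_iff]; simp
  have hVbdd : BddAbove {v : ℕ | ∃ I : Set (J n), M.Indep I ∧ Admissible I ∧ I ⊆ B ∧
      v = if ∃ c, c ∈ B ∧ sstar c ∈ B ∧ (I ∪ {c}) ∈ Iad M ∧ (I ∪ {sstar c}) ∈ Iad M
          then I.ncard + 2 else I.ncard} := by
    refine ⟨B.ncard + 2, ?_⟩
    rintro v ⟨I, hI, -, hIB, rfl⟩
    have := Set.ncard_le_ncard hIB (Set.toFinite B)
    split_ifs <;> omega
  have hmem := Nat.sSup_mem hVne hVbdd
  rw [← hrB] at hmem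
  obtain ⟨I, hIind, hIadm, hIB, hIeq⟩ := hmem
  by_cases hP : ∃ c, c ∈ B ∧ sstar c ∈ B ∧ (I ∪ {c}) ∈ Iad M ∧ (I ∪ {sstar c}) ∈ Iad M
  · rw [if_pos hP] at hIeq
    obtain ⟨c, hcB, hcsB, hc1, hc2⟩ := hP
    have hca : c = a ∨ c = sstar a := by
      by_contra h
      push_neg at h
      obtain ⟨h1, h2⟩ := h
      have hcB' : c ∈ B' := ⟨hcB, by simp [h1, h2]⟩
      have hcsB' : sstar c ∈ B' := by
        refine ⟨hcsB, ?_⟩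
        simp only [Set.mem_insert_iff, Set.mem_singleton_iff]
        rintro (h | h)
        · exact h2 (by rw [← h, sstar_sstar])
        · exact h1 (sstar_inj h)
      exact admissible_iff.1 hadm c hcB' hcsB'
    have hIa : (I ∪ {a}) ∈ Iad M ∧ (I ∪ {sstar a}) ∈ Iad M := by
      rcases hca with rfl | h
      · exact ⟨hc1, hc2⟩
      · rw [h] at hc1 hc2
        rw [sstar_sstar] at hc2
        exact ⟨hc2, hc1⟩
    have haI : a ∉ I := by
      intro haI
      have hcl := hIa.2.2
      have hsub : I ∪ {sstar a} ⊆ M.closure (I ∪ {sstar a}) := M.subset_closure _ (hsubuniv _)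
      exact admissible_iff.1 hcl a (hsub (Or.inl haI)) (hsub (Or.inr rfl))
    have hsaI : sstar a ∉ I := by
      intro hsaI
      have hcl := hIa.1.2
      have hsub : I ∪ {a} ⊆ M.closure (I ∪ {a}) := M.subset_closure _ (hsubuniv _)
      exact admissible_iff.1 hcl a (hsub (Or.inr rfl)) (hsub (Or.inl hsaI))
    have hIB' : I ⊆ B' := by
      intro x hx
      refine ⟨hIB hx, ?_⟩
      simp only [Set.mem_insert_iff, Set.mem_singleton_iff]
      rintro (rfl | rfl)
      · exact haI hx
      · exact hsaI hx
    have hcard : B'.ncard ≤ I.ncard := by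
      have := ncard_B_eq ha has
      rw [← hB'def] at this
      omega
    have hIeqB' : I = B' := Set.eq_of_subset_of_ncard_le hIB' hcard (Set.toFinite _)
    rw [hIeqB', Set.union_singleton, Set.union_singleton] at hIa
    exact ⟨hIa.1.2, hIa.2.2⟩
  · rw [if_neg hP] at hIeq
    have hIeqB : I = B := Set.eq_of_subset_of_ncard_le hIB (le_of_eq hIeq) (Set.toFinite _)
    rw [hIeqB] at hIadm
    exact absurd has (admissible_iff.1 hIadm a ha)

/-- Step B : an element outside cl(B') cannot be in both augmented closures. -/
lemma not_mem_both {M : Matroid (J n)} (hME : M.E = Set.univ)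
    {B : Set (J n)} (hB : M.IsBase B) {a : J n} (ha : a ∈ B) (has : sstar a ∈ B)
    {e : J n} (he : e ∉ M.closure (B \ {a, sstar a}))
    (h1 : e ∈ M.closure (insert a (B \ {a, sstar a})))
    (h2 : e ∈ M.closure (insert (sstar a) (B \ {a, sstar a}))) : False := by
  set B' := B \ {a, sstar a} with hB'def
  have hsubuniv : ∀ S : Set (J n), S ⊆ M.E := by intro S; rw [hME]; exact Set.subset_univ S
  have hB'B : B' ⊆ B := Set.diff_subset
  have hindep : M.Indep (insert e B') := by
    rw [(hB.indep.subset hB'B).insert_indep_iff]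
    exact Or.inl ⟨by rw [hME]; trivial, he⟩
  have hae : a ∈ M.closure (insert e B') := Matroid.mem_closure_insert he h1
  have hse : sstar a ∈ M.closure (insert e B') := Matroid.mem_closure_insert he h2
  have hBsubcl : B ⊆ M.closure (insert e B') := by
    intro x hx
    by_cases hxa : x = a
    · exact hxa ▸ hae
    by_cases hxs : x = sstar a
    · exact hxs ▸ hse
    exact M.subset_closure _ (hsubuniv _) (Set.mem_insert_of_mem _ ⟨hx, by simp [hxa, hxs]⟩)
  have hspan : M.Spanning (insert e B') := by
    rw [Matroid.spanning_iff_closure_eq (hsubuniv _)]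
    apply subset_antisymm (M.closure_subset_ground _)
    rw [← hB.closure_eq]
    exact M.closure_subset_closure_of_subset_closure hBsubcl
  have hbase : M.IsBase (insert e B') := hindep.isBase_of_spanning hspan
  have hcard := hbase.ncard_eq_ncard_of_isBase hB
  have heB' : e ∉ B' := fun h => he (M.subset_closure B' (hsubuniv _) h)
  rw [Set.ncard_insert_of_notMem heB' (Set.toFinite _)] at hcard
  have := ncard_B_eq ha has
  rw [← hB'def] at this
  omega

end MatroidHelpers

section MainDirections
variable {n : ℕ}

lemma mem_poly_of_pair {M : Matroid (J n)} {X Y : Set (J n)}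
    (hX : M.IsBase X ∧ Admissible X) (hY : M.IsBase Y ∧ Admissible Y)
    {x : Fin n → ℝ} (h : epm X + epm Y = x + x) : x ∈ PolyS M := by
  have hX' : epm X ∈ PolyS M := subset_convexHull ℝ _ ⟨X, hX, rfl⟩
  have hY' : epm Y ∈ PolyS M := subset_convexHull ℝ _ ⟨Y, hY, rfl⟩
  have hc := (convex_convexHull ℝ (epm '' {B | M.IsBase B ∧ Admissible B})) hX' hY'
    (by norm_num : (0:ℝ) ≤ 1/2) (by norm_num : (0:ℝ) ≤ 1/2) (by norm_num : (1:ℝ)/2 + 1/2 = 1)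
  have hxeq : x = (1/2 : ℝ) • epm X + (1/2 : ℝ) • epm Y := by
    funext i
    have := congrFun h i
    simp only [Pi.add_apply] at this ⊢
    simp only [Pi.smul_apply, smul_eq_mul]
    linarith
  rw [hxeq]
  exact hc

lemma diff_singleton_eq_insert {B : Set (J n)} {a : J n} (ha : a ∈ B) :
    B \ {sstar a} = insert a (B \ {a, sstar a}) := by
  ext x
  simp only [Set.mem_diff, Set.mem_singleton_iff, Set.mem_insert_iff]
  constructor
  · rintro ⟨hx, hxs⟩
    by_cases h : x = a
    · exact Or.inl h
    · exact Or.inr ⟨hx, by simp [h, hxs]⟩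
  · rintro (rfl | ⟨hx, hx2⟩)
    · exact ⟨ha, fun h => sstar_ne _ h.symm⟩
    · exact ⟨hx, fun h => hx2 (Or.inr h)⟩

lemma backward_dir {M : Matroid (J n)} (hM : IsAdmissibleMatroid M)
    {B : Set (J n)} (hB : M.IsBase B) {a : J n} (ha : a ∈ B) (has : sstar a ∈ B)
    (hadm : Admissible (B \ {a, sstar a}))
    (hne : M.closure (B \ {a, sstar a}) ∪ starSet (M.closure (B \ {a, sstar a})) ≠
        Set.univ \ {a, sstar a}) :
    envMap (indic B) ∈ PolyS M := by
  have hME := hM.1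
  set B' := B \ {a, sstar a} with hB'def
  have hsubuniv : ∀ S : Set (J n), S ⊆ M.E := by intro S; rw [hME]; exact Set.subset_univ S
  have hB'B : B' ⊆ B := Set.diff_subset
  have haF : a ∉ M.closure B' := by
    intro h
    refine hB.indep.notMem_closure_diff_of_mem ha ?_
    refine M.closure_subset_closure ?_ h
    intro x hx
    exact ⟨hx.1, by simp only [Set.mem_singleton_iff]; intro hh; exact hx.2 (Or.inl hh)⟩
  have hsF : sstar a ∉ M.closure B' := by
    intro h
    refine hB.indep.notMem_closure_diff_of_mem has ?_
    refine M.closure_subset_closure ?_ h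
    intro x hx
    exact ⟨hx.1, by simp only [Set.mem_singleton_iff]; intro hh; exact hx.2 (Or.inr hh)⟩
  have hsubset : M.closure B' ∪ starSet (M.closure B') ⊆ Set.univ \ {a, sstar a} := by
    intro x hx
    refine ⟨trivial, ?_⟩
    simp only [Set.mem_insert_iff, Set.mem_singleton_iff]
    rintro (rfl | rfl)
    · rcases hx with h | h
      · exact haF h
      · exact hsF (mem_starSet.1 h)
    · rcases hx with h | h
      · exact hsF h
      · exact haF (by rw [← sstar_sstar a]; exact mem_starSet.1 h)
  obtain ⟨b, hbU, hbFF⟩ := Set.exists_of_ssubset (ssubset_of_subset_of_ne hsubset hne)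
  have hba : b ≠ a := by intro h; exact hbU.2 (Or.inl h)
  have hbs : b ≠ sstar a := by intro h; exact hbU.2 (Or.inr h)
  have hbF1 : b ∉ M.closure B' := fun h => hbFF (Or.inl h)
  have hbF2 : sstar b ∉ M.closure B' := fun h => hbFF (Or.inr (mem_starSet.2 h))
  obtain ⟨admKa, admKs⟩ := closure_adm_pair hM hB ha has hadm
  rw [← hB'def] at admKa admKs
  have hgen : ∀ α : J n, (α = a ∨ α = sstar a) → B \ {sstar α} = insert α B' := by
    rintro α (rfl | rfl)
    · exact diff_singleton_eq_insert ha
    · have h := diff_singleton_eq_insert (a := sstar a) has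
      rw [sstar_sstar] at h
      rw [sstar_sstar]
      rw [h, Set.pair_comm (sstar a) a]
  have key : ∀ α : J n, (α = a ∨ α = sstar a) →
      b ∉ M.closure (insert α B') → sstar b ∉ M.closure (insert (sstar α) B') →
      envMap (indic B) ∈ PolyS M := by
    intro α hα hbKα hsbKα'
    have hα' : sstar α = a ∨ sstar α = sstar a := by
      rcases hα with rfl | rfl
      · exact Or.inr rfl
      · exact Or.inl (sstar_sstar a)
    have hαB : α ∈ B := by rcases hα with rfl | rfl; exacts [ha, has]
    have hsαB : sstar α ∈ B := by
      rcases hα with rfl | rfl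
      · exact has
      · rw [sstar_sstar]; exact ha
    have hαB' : α ∉ B' := by rcases hα with rfl | rfl; exacts [a_notmem_diff _, sa_notmem_diff _]
    have hsαB' : sstar α ∉ B' := by
      rcases hα with rfl | rfl
      · exact sa_notmem_diff _
      · rw [sstar_sstar]; exact a_notmem_diff _
    have hbB' : b ∉ B' := fun h => hbF1 (M.subset_closure _ (hsubuniv _) h)
    have hsbB' : sstar b ∉ B' := fun h => hbF2 (M.subset_closure _ (hsubuniv _) h)
    have hbα : b ≠ α := by rcases hα with rfl | rfl; exacts [hba, hbs]
    have hbsα : b ≠ sstar α := by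
      rcases hα with rfl | rfl
      · exact hbs
      · rw [sstar_sstar]; exact hba
    have hbB : b ∉ B := by
      intro h
      rw [B_eq_insert ha has] at h
      rcases h with h | h | h
      · exact hba h
      · exact hbs h
      · exact hbB' h
    have hsbB : sstar b ∉ B := by
      intro h
      rw [B_eq_insert ha has] at h
      rcases h with h | h | h
      · exact hbs (by rw [← h, sstar_sstar])
      · exact hba (sstar_inj h)
      · exact hsbB' h
    -- X
    have hXindep : M.Indep (insert b (insert α B')) := by
      have h1 : M.Indep (insert α B') := hB.indep.subset (Set.insert_subset hαB hB'B)
      rw [h1.insert_indep_iff]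
      exact Or.inl ⟨by rw [hME]; trivial, hbKα⟩
    have hXbase : M.IsBase (insert b (insert α B')) := by
      rw [← hgen α hα]
      exact hB.exchange_isBase_of_indep hbB (by rw [hgen α hα]; exact hXindep)
    have hXadm : Admissible (insert b (insert α B')) :=
      admissible_insert2 hadm hαB' hsαB' hbB' hsbB' (fun h => hbα h.symm) (fun h => hbsα h.symm)
    -- Y
    have hYindep : M.Indep (insert (sstar b) (insert (sstar α) B')) := by
      have h1 : M.Indep (insert (sstar α) B') := hB.indep.subset (Set.insert_subset hsαB hB'B)
      rw [h1.insert_indep_iff]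
      exact Or.inl ⟨by rw [hME]; trivial, hsbKα'⟩
    have hYbase : M.IsBase (insert (sstar b) (insert (sstar α) B')) := by
      rw [← hgen (sstar α) hα']
      exact hB.exchange_isBase_of_indep hsbB (by rw [hgen (sstar α) hα']; exact hYindep)
    have hYadm : Admissible (insert (sstar b) (insert (sstar α) B')) := by
      refine admissible_insert2 hadm hsαB' (by rw [sstar_sstar]; exact hαB')
        hsbB' (by rw [sstar_sstar]; exact hbB') ?_ ?_
      · intro h; exact hbα (sstar_inj h).symm
      · rw [sstar_sstar]; intro h; exact hbsα (by rw [h, sstar_sstar])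
    refine mem_poly_of_pair ⟨hXbase, hXadm⟩ ⟨hYbase, hYadm⟩ ?_
    have hbins : b ∉ insert α B' := by
      simp only [Set.mem_insert_iff]
      rintro (h | h)
      · exact hbα h
      · exact hbB' h
    have hsbins : sstar b ∉ insert (sstar α) B' := by
      simp only [Set.mem_insert_iff]
      rintro (h | h)
      · exact hbα (sstar_inj h)
      · exact hsbB' h
    show _ = epm B + epm B
    rw [epm_insert hbins, epm_insert hαB', epm_insert hsbins, epm_insert hsαB',
      epm_single_star, epm_single_star, epm_B_eq ha has, ← hB'def]
    abel
  by_cases hc : b ∉ M.closure (insert a B') ∧ sstar b ∉ M.closure (insert (sstar a) B')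
  · exact key a (Or.inl rfl) hc.1 hc.2
  · have hc' : b ∈ M.closure (insert a B') ∨ sstar b ∈ M.closure (insert (sstar a) B') := by
      rcases not_and_or.1 hc with h | h
      · exact Or.inl (not_not.1 h)
      · exact Or.inr (not_not.1 h)
    refine key (sstar a) (Or.inr rfl) ?_ ?_
    · rcases hc' with h | h
      · intro hks; exact not_mem_both hME hB ha has hbF1 h hks
      · intro hks
        have := admissible_iff.1 admKs (sstar b) h
        rw [sstar_sstar] at this
        exact this hks
    · rw [sstar_sstar]
      rcases hc' with h | h
      · exact admissible_iff.1 admKa b h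
      · intro hka; exact not_mem_both hME hB ha has hbF2 hka h

end MainDirections

section ForwardDir
variable {n : ℕ}

lemma lin_sum (w : Fin n → ℝ) : IsLinearMap ℝ (fun x : Fin n → ℝ => ∑ i, w i * x i) := by
  constructor
  · intro x y
    simp only [Pi.add_apply, mul_add]
    rw [Finset.sum_add_distrib]
  · intro c x
    simp only [Pi.smul_apply, smul_eq_mul, Finset.mul_sum]
    exact Finset.sum_congr rfl fun i _ => by ring

lemma forward_dir {M : Matroid (J n)} (hM : IsAdmissibleMatroid M)
    {B : Set (J n)} (hB : M.IsBase B) {a : J n} (ha : a ∈ B) (has : sstar a ∈ B)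
    (hadm : Admissible (B \ {a, sstar a}))
    (heq : M.closure (B \ {a, sstar a}) ∪ starSet (M.closure (B \ {a, sstar a})) =
        Set.univ \ {a, sstar a}) :
    envMap (indic B) ∉ PolyS M := by
  have hME := hM.1
  set B' := B \ {a, sstar a} with hB'def
  have hsubuniv : ∀ S : Set (J n), S ⊆ M.E := by intro S; rw [hME]; exact Set.subset_univ S
  have hB'B : B' ⊆ B := Set.diff_subset
  have hB'i : M.Indep B' := hB.indep.subset hB'B
  set m := B'.ncard with hmdef
  set F := M.closure B' with hFdef
  have haF : a ∉ F := by
    intro h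
    refine hB.indep.notMem_closure_diff_of_mem ha ?_
    refine M.closure_subset_closure ?_ h
    intro x hx
    exact ⟨hx.1, by simp only [Set.mem_singleton_iff]; intro hh; exact hx.2 (Or.inl hh)⟩
  have hsF : sstar a ∉ F := by
    intro h
    refine hB.indep.notMem_closure_diff_of_mem has ?_
    refine M.closure_subset_closure ?_ h
    intro x hx
    exact ⟨hx.1, by simp only [Set.mem_singleton_iff]; intro hh; exact hx.2 (Or.inr hh)⟩
  have admF : Admissible F := by
    have := (closure_adm_pair hM hB ha has hadm).1
    rw [← hB'def] at this
    exact this.mono (M.closure_subset_closure (Set.subset_insert _ _))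
  set A := insert a F with hAdef
  have admA : Admissible A := by
    rw [admissible_iff]
    intro x hx hsx
    rcases hx with rfl | hx
    · rcases hsx with h | h
      · exact sstar_ne x h
      · exact hsF h
    · rcases hsx with h | h
      · exact hsF (by rw [← h, sstar_sstar]; exact hx)
      · exact admissible_iff.1 admF x hx h
  have hAunion : ∀ x : J n, x ∈ A ∨ x ∈ starSet A := by
    intro x
    by_cases h1 : x = a
    · exact Or.inl (Or.inl h1)
    by_cases h2 : x = sstar a
    · refine Or.inr (mem_starSet.2 ?_)
      rw [h2, sstar_sstar]
      exact Or.inl rfl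
    have hx : x ∈ M.closure B' ∪ starSet (M.closure B') := by
      rw [heq]
      exact ⟨trivial, by simp [h1, h2]⟩
    rcases hx with h | h
    · exact Or.inl (Or.inr h)
    · exact Or.inr (mem_starSet.2 (Or.inr (mem_starSet.1 h)))
  -- the linear functional
  set w : Fin n → ℝ := fun i => 2 * epm A i + epm ({sstar a} : Set (J n)) i with hwdef
  have hsum : ∀ T : Set (J n), ∑ i, w i * epm T i =
      2 * (((A ∩ T).ncard : ℝ) - ((A ∩ starSet T).ncard : ℝ))
        + ((({sstar a} ∩ T).ncard : ℝ) - (({sstar a} ∩ starSet T).ncard : ℝ)) := by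
    intro T
    have : ∀ i, w i * epm T i = 2 * (epm A i * epm T i) + epm ({sstar a} : Set (J n)) i * epm T i :=
      fun i => by rw [hwdef]; ring
    rw [Finset.sum_congr rfl fun i _ => this i, Finset.sum_add_distrib, ← Finset.mul_sum,
      sum_epm_mul, sum_epm_mul]
  -- bound on vertices
  have hbound : ∀ C : Set (J n), M.IsBase C → Admissible C →
      ∑ i, w i * epm C i ≤ 2 * (m : ℝ) - 1 := by
    intro C hC hCadm
    have hC2 : C.ncard = m + 2 := by
      rw [hC.ncard_eq_ncard_of_isBase hB, ncard_B_eq ha has, ← hB'def, hmdef]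
    have hcover : C ⊆ (A ∩ C) ∪ (starSet A ∩ C) := by
      intro x hx
      rcases hAunion x with h | h
      · exact Or.inl ⟨h, hx⟩
      · exact Or.inr ⟨h, hx⟩
    have hqq : (starSet A ∩ C) = starSet (A ∩ starSet C) := by
      ext x
      simp only [Set.mem_inter_iff, mem_starSet]
      constructor
      · rintro ⟨h1, h2⟩
        exact ⟨h1, by rw [sstar_sstar]; exact h2⟩
      · rintro ⟨h1, h2⟩
        rw [sstar_sstar] at h2
        exact ⟨h1, h2⟩
    have hstarinj : Function.Injective (sstar (n := n)) := fun x y h => sstar_inj h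
    have hqcard : (starSet A ∩ C).ncard = (A ∩ starSet C).ncard := by
      rw [hqq, starSet, Set.ncard_image_of_injective _ hstarinj]
    have hcovcard : m + 2 ≤ (A ∩ C).ncard + (A ∩ starSet C).ncard := by
      have h1 : C.ncard ≤ ((A ∩ C) ∪ (starSet A ∩ C)).ncard :=
        Set.ncard_le_ncard hcover (Set.toFinite _)
      have h2 := Set.ncard_union_le (A ∩ C) (starSet A ∩ C)
      rw [hqcard] at h2
      omega
    have hFC : (F ∩ C).ncard ≤ m := by
      have hFCi : M.Indep (F ∩ C) := hC.indep.subset Set.inter_subset_right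
      obtain ⟨Jb, hJb, hsubJ⟩ := hFCi.subset_isBasis_of_subset Set.inter_subset_left
        (M.closure_subset_ground B')
      have hB'b : M.IsBasis B' F := hB'i.isBasis_closure
      have hJcard := hJb.encard_eq_encard hB'b
      have h1 : (F ∩ C).ncard ≤ Jb.ncard := Set.ncard_le_ncard hsubJ (Set.toFinite _)
      have h2 : Jb.ncard = m := by
        rw [hmdef, Set.ncard_def, Set.ncard_def, hJcard]
      omega
    have hp : (A ∩ C).ncard ≤ m + 1 := by
      have hsub : A ∩ C ⊆ insert a (F ∩ C) := by
        rintro x ⟨hx1, hx2⟩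
        rcases hx1 with rfl | hx1
        · exact Or.inl rfl
        · exact Or.inr ⟨hx1, hx2⟩
      have h1 : (A ∩ C).ncard ≤ (insert a (F ∩ C)).ncard :=
        Set.ncard_le_ncard hsub (Set.toFinite _)
      have h2 := Set.ncard_insert_le a (F ∩ C)
      omega
    rw [hsum C]
    by_cases haC : a ∈ C
    · have hsaC : sstar a ∉ C := admissible_iff.1 hCadm a haC
      have hχ1 : ({sstar a} : Set (J n)) ∩ C = ∅ := by
        ext x
        simp only [Set.mem_inter_iff, Set.mem_singleton_iff, Set.mem_empty_iff_false, iff_false,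
          not_and]
        rintro rfl
        exact hsaC
      have hχ2 : ({sstar a} : Set (J n)) ∩ starSet C = {sstar a} := by
        ext x
        simp only [Set.mem_inter_iff, Set.mem_singleton_iff, mem_starSet]
        constructor
        · rintro ⟨h, -⟩; exact h
        · rintro rfl
          exact ⟨rfl, by rw [sstar_sstar]; exact haC⟩
      rw [hχ1, hχ2]
      have e1 : ((∅ : Set (J n)).ncard : ℝ) = 0 := by rw [Set.ncard_empty]; norm_num
      have e2 : (({sstar a} : Set (J n)).ncard : ℝ) = 1 := by rw [Set.ncard_singleton]; norm_num
      rw [e1, e2]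
      have c1 : ((A ∩ C).ncard : ℝ) ≤ (m : ℝ) + 1 := by exact_mod_cast hp
      have c2 : (m : ℝ) + 2 ≤ ((A ∩ C).ncard : ℝ) + ((A ∩ starSet C).ncard : ℝ) := by
        exact_mod_cast hcovcard
      linarith
    · have hp' : (A ∩ C).ncard ≤ m := by
        have hsub : A ∩ C ⊆ F ∩ C := by
          rintro x ⟨hx1, hx2⟩
          rcases hx1 with rfl | hx1
          · exact absurd hx2 haC
          · exact ⟨hx1, hx2⟩
        have := Set.ncard_le_ncard hsub (Set.toFinite _)
        omega
      have hχ1 : (({sstar a} : Set (J n)) ∩ C).ncard ≤ 1 := by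
        have := Set.ncard_le_ncard (Set.inter_subset_left (s := ({sstar a} : Set (J n))) (t := C))
          (Set.toFinite _)
        rwa [Set.ncard_singleton] at this
      have c1 : ((A ∩ C).ncard : ℝ) ≤ (m : ℝ) := by exact_mod_cast hp'
      have c2 : (m : ℝ) + 2 ≤ ((A ∩ C).ncard : ℝ) + ((A ∩ starSet C).ncard : ℝ) := by
        exact_mod_cast hcovcard
      have c3 : ((({sstar a} : Set (J n)) ∩ C).ncard : ℝ) ≤ 1 := by exact_mod_cast hχ1
      have c4 : (0 : ℝ) ≤ ((({sstar a} : Set (J n)) ∩ starSet C).ncard : ℝ) := by positivity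
      linarith
  -- value at epm B'
  have hvalue : ∑ i, w i * epm B' i = 2 * (m : ℝ) := by
    rw [hsum B']
    have h1 : A ∩ B' = B' := by
      apply Set.inter_eq_self_of_subset_right
      exact (M.subset_closure B' (hsubuniv _)).trans (Set.subset_insert _ _)
    have h2 : A ∩ starSet B' = ∅ := by
      ext x
      simp only [Set.mem_inter_iff, Set.mem_empty_iff_false, iff_false, not_and]
      intro hx hsx
      have hsxB' : sstar x ∈ B' := mem_starSet.1 hsx
      rcases hx with rfl | hx
      · exact sa_notmem_diff _ hsxB'
      · exact admissible_iff.1 admF x hx (M.subset_closure B' (hsubuniv _) hsxB')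
    have h3 : ({sstar a} : Set (J n)) ∩ B' = ∅ := by
      ext x
      simp only [Set.mem_inter_iff, Set.mem_singleton_iff, Set.mem_empty_iff_false, iff_false,
        not_and]
      rintro rfl
      exact sa_notmem_diff _
    have h4 : ({sstar a} : Set (J n)) ∩ starSet B' = ∅ := by
      ext x
      simp only [Set.mem_inter_iff, Set.mem_singleton_iff, Set.mem_empty_iff_false, iff_false,
        not_and]
      rintro rfl h
      have := mem_starSet.1 h
      rw [sstar_sstar] at this
      exact a_notmem_diff _ this
    rw [h1, h2, h3, h4, Set.ncard_empty, hmdef]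
    push_cast
    ring
  -- conclude
  intro hmem
  have hsub : PolyS M ⊆ {x : Fin n → ℝ | ∑ i, w i * x i ≤ 2 * (m : ℝ) - 1} := by
    apply convexHull_min
    · rintro x ⟨C, ⟨hCb, hCadm⟩, rfl⟩
      exact hbound C hCb hCadm
    · exact convex_halfSpace_le (lin_sum w) _
  have hle := hsub hmem
  have hveq : envMap (indic B) = epm B' := by
    rw [hB'def]
    exact epm_B_eq ha has
  rw [Set.mem_setOf_eq, hveq, hvalue] at hle
  linarith

end ForwardDir

theorem stmt_10 (n : ℕ) (hn : 1 ≤ n) (M : Matroid (J n)) (hM : IsAdmissibleMatroid M)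
    (B : Set (J n)) (hB : M.IsBase B) (a : J n) (ha : a ∈ B) (has : sstar a ∈ B)
    (hadm : Admissible (B \ {a, sstar a})) :
    envMap (indic B) ∈ PolyS M ↔
      M.closure (B \ {a, sstar a}) ∪ starSet (M.closure (B \ {a, sstar a})) ≠
        Set.univ \ {a, sstar a} := by
  constructor
  · intro hmem heq
    exact forward_dir hM hB ha has hadm heq hmem
  · intro hne
    exact backward_dir hM hB ha has hadm hne
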